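/- Let Φ be a set of pairs of natural numbers (m,n) with n > m > 1. If a modal formula φ is satisfiable in some model whose underlying frame is a Φ-frame, then φ is satisfiable in some model whose underlying frame is a finite Φ-frame. (This is the semantic form of the paper's main theorem: the normal modal logic K ⊕ {◇^m p → ◇^n p : (m,n) ∈ Φ} has the finite model property, using that by Sahlqvist this logic is sound and complete for the class of Φ-frames.) -/

import Mathlib

/-- Modal formulas: ⊥, propositional variables, ¬, ∨, ◇. -/
inductive ModalFormula : Type
  | bot : ModalFormula
  | var : ℕ → ModalFormula
  | neg : ModalFormula → ModalFormula
  | or : ModalFormula → ModalFormula → ModalFormula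
  | dia : ModalFormula → ModalFormula

namespace ModalFormula

/-- Modal depth: maximal nesting of ◇. -/
def md : ModalFormula → ℕ
  | bot => 0
  | var _ => 0
  | neg φ => md φ
  | or φ ψ => max (md φ) (md ψ)
  | dia φ => md φ + 1

/-- The set of propositional variables occurring in a formula. -/
def vars : ModalFormula → Set ℕ
  | bot => ∅
  | var p => {p}
  | neg φ => vars φ
  | or φ ψ => vars φ ∪ vars ψ
  | dia φ => vars φ

/-- The set of subformulas of a formula (including the formula itself). -/
def subformulas : ModalFormula → Set ModalFormula
  | bot => {bot}
  | var p => {var p}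
  | neg φ => insert (neg φ) (subformulas φ)
  | or φ ψ => insert (or φ ψ) (subformulas φ ∪ subformulas ψ)
  | dia φ => insert (dia φ) (subformulas φ)

end ModalFormula

/-- Standard Kripke satisfaction for a model given by a relation `R` and a valuation `V`. -/
def Sat {W : Type*} (R : W → W → Prop) (V : ℕ → Set W) : W → ModalFormula → Prop
  | _, .bot => False
  | w, .var p => w ∈ V p
  | w, .neg φ => ¬ Sat R V w φ
  | w, .or φ ψ => Sat R V w φ ∨ Sat R V w ψ
  | w, .dia φ => ∃ v, R w v ∧ Sat R V v φ

/-- The `k`-step relation: `relPow R 0` is the identity, `relPow R (k+1) = relPow R k ∘ R`. -/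
def relPow {W : Type*} (R : W → W → Prop) : ℕ → W → W → Prop
  | 0, x, y => x = y
  | k + 1, x, y => ∃ u, relPow R k x u ∧ R u y

/-- A frame is a `Φ`-frame if for every `(m,n) ∈ Φ`, `x R^m y` implies `x R^n y`. -/
def PhiFrame {W : Type*} (R : W → W → Prop) (Φ : Set (ℕ × ℕ)) : Prop :=
  ∀ mn ∈ Φ, ∀ x y : W, relPow R mn.1 x y → relPow R mn.2 x y

/-- A pointed frame is rooted at `r` if every world is reachable from `r` in some number of steps. -/
def Rooted {W : Type*} (R : W → W → Prop) (r : W) : Prop :=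
  ∀ w : W, ∃ k, relPow R k r w

/-- The depth of `w` w.r.t. `r`: the least `k` with `r R^k w`. -/
noncomputable def depth {W : Type*} (R : W → W → Prop) (r w : W) : ℕ :=
  sInf {k | relPow R k r w}

/-- `f` is a pointed p-morphism from `(W',R',r')` to `(W,R,r)`. -/
def IsPMorphism {W' W : Type*} (R' : W' → W' → Prop) (r' : W')
    (R : W → W → Prop) (r : W) (f : W' → W) : Prop :=
  f r' = r ∧ (∀ x y, R' x y → R (f x) (f y)) ∧
    (∀ x y', R (f x) y' → ∃ y, R' x y ∧ f y = y')

/-- Bisimilarity of `x` (in model `(R,V)`) and `x'` (in model `(R',V')`). -/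
def Bisim {W W' : Type*} (R : W → W → Prop) (V : ℕ → Set W)
    (R' : W' → W' → Prop) (V' : ℕ → Set W') (x : W) (x' : W') : Prop :=
  ∃ Z : W → W' → Prop, Z x x' ∧ ∀ w w', Z w w' →
    (∀ p, w ∈ V p ↔ w' ∈ V' p) ∧
    (∀ v, R w v → ∃ v', R' w' v' ∧ Z v v') ∧
    (∀ v', R' w' v' → ∃ v, R w v ∧ Z v v')

/-- `k`-bisimilarity w.r.t. the set `X` of propositional variables. -/
def kBisim {W W' : Type*} (R : W → W → Prop) (V : ℕ → Set W)
    (R' : W' → W' → Prop) (V' : ℕ → Set W') (X : Set ℕ) :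
    ℕ → W → W' → Prop
  | 0, w, w' => ∀ p ∈ X, (w ∈ V p ↔ w' ∈ V' p)
  | k + 1, w, w' => (∀ p ∈ X, (w ∈ V p ↔ w' ∈ V' p)) ∧
      (∀ v, R w v → ∃ v', R' w' v' ∧ kBisim R V R' V' X k v v') ∧
      (∀ v', R' w' v' → ∃ v, R w v ∧ kBisim R V R' V' X k v v')

/-- `DepthPath R dep n x z` says there is an `n`-step `R`-path
`x R w₁ R ⋯ R w_{n-1} R z` whose intermediate points satisfy `dep (w_j) = dep x + j`. -/
def DepthPath {W : Type*} (R : W → W → Prop) (dep : W → ℕ) (n : ℕ) (x z : W) : Prop :=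
  ∃ w : ℕ → W, w 0 = x ∧ w n = z ∧ (∀ j < n, R (w j) (w (j + 1))) ∧
    ∀ j, 0 < j → j < n → dep (w j) = dep x + j

/- ======================================================================= -/
/- Auxiliary material for the proof of the main theorem.                  -/
/- ======================================================================= -/

namespace FMPAux

open ModalFormula

lemma vars_finite (φ : ModalFormula) : (vars φ).Finite := by
  induction φ with
  | bot => simpa [vars] using Set.finite_empty
  | var p => simpa [vars] using Set.finite_singleton p
  | neg ψ ih => simpa [vars] using ih
  | or ψ χ ih1 ih2 => simpa [vars] using ih1.union ih2
  | dia ψ ih => simpa [vars] using ih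

section RelPow

variable {α : Type*} {S : α → α → Prop}

lemma relPow_append : ∀ {b a : ℕ} {x u y : α},
    relPow S a x u → relPow S b u y → relPow S (a + b) x y := by
  intro b
  induction b with
  | zero =>
    intro a x u y h1 h2
    have : u = y := h2
    simpa [this] using h1
  | succ k ih =>
    intro a x u y h1 h2
    obtain ⟨v, hv, hS⟩ := h2
    exact ⟨v, ih h1 hv, hS⟩

lemma relPow_loop (u : α) (h : S u u) : ∀ t, relPow S t u u := by
  intro t
  induction t with
  | zero => rfl
  | succ k ih => exact ⟨u, ih, h⟩

lemma relPow_seq {n : ℕ} {x y : α} (h : relPow S n x y) :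
    ∃ f : ℕ → α, f 0 = x ∧ f n = y ∧ ∀ i < n, S (f i) (f (i + 1)) := by
  induction n generalizing y with
  | zero =>
    have : x = y := h
    exact ⟨fun _ => x, rfl, this, by omega⟩
  | succ k ih =>
    obtain ⟨u, hk, hS⟩ := h
    obtain ⟨f, h0, hk', hE⟩ := ih hk
    refine ⟨fun j => if j ≤ k then f j else y, by simp [h0], by simp, ?_⟩
    intro i hi
    by_cases hik : i < k
    · have h1 : i ≤ k := by omega
      have h2 : i + 1 ≤ k := by omega
      simp only [h1, h2, if_pos]
      exact hE i hik
    · have : i = k := by omega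
      subst this
      simp only [le_refl, if_pos, if_neg (by omega : ¬ (i + 1 ≤ i))]
      rw [hk']
      exact hS

lemma relPow_seq_from (f : ℕ → α) (j : ℕ) :
    ∀ k, j ≤ k → (∀ i, j ≤ i → i < k → S (f i) (f (i + 1))) →
    relPow S (k - j) (f j) (f k) := by
  intro k
  induction k with
  | zero =>
    intro hj _
    have : j = 0 := by omega
    subst this
    rfl
  | succ k ih =>
    intro hj hE
    by_cases hjk : j = k + 1
    · subst hjk
      simp only [Nat.sub_self]
      rfl
    · have hj' : j ≤ k := by omega
      have : k + 1 - j = (k - j) + 1 := by omega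
      rw [this]
      exact ⟨f k, ih hj' (fun i h1 h2 => hE i h1 (by omega)), hE k hj' (by omega)⟩

end RelPow

section Types

variable {W : Type*} (R : W → W → Prop) (V : ℕ → Set W) (X : Set ℕ)

/-- Hereditarily finite "type" objects of given depth over variable set `X`. -/
def T : ℕ → Type
  | 0 => Set ↥X
  | r + 1 => Set ↥X × Set (T r)

lemma finiteT [Finite ↥X] : ∀ r, Finite (T X r) := by
  intro r
  induction r with
  | zero => exact inferInstanceAs (Finite (Set ↥X))
  | succ k ih =>
    haveI := ih
    haveI : Finite (Set (T X k)) := inferInstance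
    exact inferInstanceAs (Finite (Set ↥X × Set (T X k)))

/-- The depth-`r` type of a world. -/
def typeOf : (r : ℕ) → W → T X r
  | 0, v => {p | v ∈ V ↑p}
  | r + 1, v => ({p | v ∈ V ↑p}, {t | ∃ z, R v z ∧ typeOf r z = t})

/-- Truncation of a type by one level. -/
noncomputable def truncT : (r : ℕ) → T X (r + 1) → T X r
  | 0, t => t.1
  | r + 1, t => (t.1, truncT r '' t.2)

lemma truncT_typeOf : ∀ (r : ℕ) (v : W), truncT X r (typeOf R V X (r + 1) v) = typeOf R V X r v := by
  intro r
  induction r with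
  | zero => intro v; rfl
  | succ k ih =>
    intro v
    have hL : truncT X (k + 1) (typeOf R V X (k + 1 + 1) v)
        = (({p | v ∈ V ↑p} : Set ↥X),
            truncT X k '' {t | ∃ z, R v z ∧ typeOf R V X (k + 1) z = t}) := rfl
    have hR : typeOf R V X (k + 1) v
        = (({p | v ∈ V ↑p} : Set ↥X), {t | ∃ z, R v z ∧ typeOf R V X k z = t}) := rfl
    rw [hL, hR]
    refine Prod.ext rfl ?_
    show truncT X k '' {t | ∃ z, R v z ∧ typeOf R V X (k + 1) z = t}
        = {t | ∃ z, R v z ∧ typeOf R V X k z = t}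
    ext t
    simp only [Set.mem_image, Set.mem_setOf_eq]
    constructor
    · rintro ⟨t', ⟨z, hz, rfl⟩, rfl⟩
      exact ⟨z, hz, (ih z).symm⟩
    · rintro ⟨z, hz, rfl⟩
      exact ⟨typeOf R V X (k + 1) z, ⟨z, hz, rfl⟩, ih z⟩

lemma typeOf_step {r : ℕ} {u v : W}
    (h : typeOf R V X (r + 1) u = typeOf R V X (r + 1) v) :
    typeOf R V X r u = typeOf R V X r v := by
  rw [← truncT_typeOf R V X r u, ← truncT_typeOf R V X r v, h]

lemma typeOf_mono : ∀ {r s : ℕ}, s ≤ r → ∀ {u v : W},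
    typeOf R V X r u = typeOf R V X r v → typeOf R V X s u = typeOf R V X s v := by
  intro r
  induction r with
  | zero =>
    intro s hs u v h
    have : s = 0 := by omega
    subst this; exact h
  | succ k ih =>
    intro s hs u v h
    by_cases hsk : s = k + 1
    · subst hsk; exact h
    · exact ih (by omega) (typeOf_step R V X h)

lemma typeOf_lift {r : ℕ} {u v z : W}
    (h : typeOf R V X (r + 1) u = typeOf R V X (r + 1) v) (hz : R u z) :
    ∃ z', R v z' ∧ typeOf R V X r z = typeOf R V X r z' := by
  have h2 : ({t | ∃ w', R u w' ∧ typeOf R V X r w' = t} : Set (T X r))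
      = {t | ∃ w', R v w' ∧ typeOf R V X r w' = t} :=
    congrArg Prod.snd h
  have hm : typeOf R V X r z ∈ ({t | ∃ w', R u w' ∧ typeOf R V X r w' = t} : Set (T X r)) :=
    ⟨z, hz, rfl⟩
  rw [h2] at hm
  obtain ⟨z', hz', ht⟩ := hm
  exact ⟨z', hz', ht.symm⟩

/-- The valuation profile of a type. -/
def profT : (r : ℕ) → T X r → Set ↥X
  | 0, t => t
  | _ + 1, t => t.1

lemma profT_typeOf : ∀ (r : ℕ) (v : W),
    profT X r (typeOf R V X r v) = ({p | v ∈ V ↑p} : Set ↥X) := by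
  intro r v
  cases r with
  | zero => rfl
  | succ k => rfl

lemma mem_V_of_typeOf {r : ℕ} {p : ℕ} (hp : p ∈ X) {u v : W}
    (h : typeOf R V X r u = typeOf R V X r v) : u ∈ V p ↔ v ∈ V p := by
  have h2 := congrArg (profT X r) h
  rw [profT_typeOf, profT_typeOf] at h2
  exact Set.ext_iff.mp h2 ⟨p, hp⟩

lemma sat_pres : ∀ (ψ : ModalFormula), vars ψ ⊆ X → ∀ (r : ℕ), md ψ ≤ r → ∀ (u v : W),
    typeOf R V X r u = typeOf R V X r v → (Sat R V u ψ ↔ Sat R V v ψ) := by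
  intro ψ
  induction ψ with
  | bot => intro _ r _ u v _; exact Iff.rfl
  | var p =>
    intro hv r _ u v h
    exact mem_V_of_typeOf R V X (hv (by simp [vars])) h
  | neg ψ ih =>
    intro hv r hmd u v h
    exact not_congr (ih hv r hmd u v h)
  | or ψ χ ih1 ih2 =>
    intro hv r hmd u v h
    have hv1 : vars ψ ⊆ X := fun q hq => hv (Set.mem_union_left _ hq)
    have hv2 : vars χ ⊆ X := fun q hq => hv (Set.mem_union_right _ hq)
    simp only [md] at hmd
    exact or_congr (ih1 hv1 r (by omega) u v h) (ih2 hv2 r (by omega) u v h)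
  | dia ψ ih =>
    intro hv r hmd u v h
    simp only [md] at hmd
    cases r with
    | zero => omega
    | succ r' =>
      show (∃ z, R u z ∧ Sat R V z ψ) ↔ (∃ z, R v z ∧ Sat R V z ψ)
      constructor
      · rintro ⟨z, hz, hs⟩
        obtain ⟨z', hz', he⟩ := typeOf_lift R V X h hz
        exact ⟨z', hz', (ih hv r' (by omega) z z' he).mp hs⟩
      · rintro ⟨z, hz, hs⟩
        obtain ⟨z', hz', he⟩ := typeOf_lift R V X h.symm hz
        exact ⟨z', hz', (ih hv r' (by omega) z z' he).mp hs⟩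

end Types

section Model

variable {W : Type*} (R : W → W → Prop) (V : ℕ → Set W) (X : Set ℕ) (d : ℕ)

/-- The worlds of the finite model: a level `a ≤ d` together with a type of depth `d - a`. -/
def Wfin : Type := (a : Fin (d + 1)) × T X (d - a.val)

/-- The relation of the finite model. -/
def Rfin : Wfin X d → Wfin X d → Prop := fun x y =>
  y.1.val ≤ x.1.val + 1 ∧
    (x.1.val = d ∨
      ∃ u z yw, typeOf R V X (d - x.1.val) u = x.2 ∧ R u z ∧
        typeOf R V X (d - x.1.val - 1) z = typeOf R V X (d - x.1.val - 1) yw ∧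
        typeOf R V X (d - y.1.val) yw = y.2)

/-- The valuation of the finite model. -/
def Vfin : ℕ → Set (Wfin X d) := fun p =>
  {x | ∃ hp : p ∈ X, (⟨p, hp⟩ : ↥X) ∈ profT X (d - x.1.val) x.2}

lemma finiteWfin [Finite ↥X] : Finite (Wfin X d) := by
  letI : ∀ a : Fin (d + 1), Finite (T X (d - a.val)) := fun a => finiteT X _
  exact inferInstanceAs (Finite ((a : Fin (d + 1)) × T X (d - a.val)))

/-- Truth lemma. -/
lemma truth : ∀ (ψ : ModalFormula), vars ψ ⊆ X → ∀ (a : Fin (d + 1)) (v : W),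
    md ψ ≤ d - a.val →
    (Sat R V v ψ ↔
      Sat (Rfin R V X d) (Vfin X d) ⟨a, typeOf R V X (d - a.val) v⟩ ψ) := by
  intro ψ
  induction ψ with
  | bot => intro _ a v _; exact Iff.rfl
  | var p =>
    intro hv a v _
    have hp : p ∈ X := hv (by simp [vars])
    show v ∈ V p ↔ (⟨a, typeOf R V X (d - a.val) v⟩ : Wfin X d) ∈ Vfin X d p
    simp only [Vfin, Set.mem_setOf_eq]
    constructor
    · intro h
      refine ⟨hp, ?_⟩
      show (⟨p, hp⟩ : ↥X) ∈ profT X (d - a.val) (typeOf R V X (d - a.val) v)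
      rw [profT_typeOf]
      exact h
    · rintro ⟨hp', h⟩
      have h' : (⟨p, hp'⟩ : ↥X) ∈ profT X (d - a.val) (typeOf R V X (d - a.val) v) := h
      rw [profT_typeOf] at h'
      exact h' 
  | neg ψ ih =>
    intro hv a v hmd
    exact not_congr (ih hv a v hmd)
  | or ψ χ ih1 ih2 =>
    intro hv a v hmd
    have hv1 : vars ψ ⊆ X := fun q hq => hv (Set.mem_union_left _ hq)
    have hv2 : vars χ ⊆ X := fun q hq => hv (Set.mem_union_right _ hq)
    simp only [md] at hmd
    exact or_congr (ih1 hv1 a v (by omega)) (ih2 hv2 a v (by omega))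
  | dia ψ ih =>
    intro hv a v hmd
    simp only [md] at hmd
    have ha : a.val < d := by omega
    have hmd' : md ψ ≤ d - (a.val + 1) := by omega
    show (∃ z, R v z ∧ Sat R V z ψ) ↔
      (∃ y', Rfin R V X d ⟨a, typeOf R V X (d - a.val) v⟩ y' ∧ Sat _ _ y' ψ)
    constructor
    · rintro ⟨z, hz, hs⟩
      refine ⟨⟨⟨a.val + 1, by omega⟩, typeOf R V X (d - (a.val + 1)) z⟩, ?_, ?_⟩
      · exact ⟨by simp, Or.inr ⟨v, z, z, rfl, hz, rfl, rfl⟩⟩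
      · exact (ih hv ⟨a.val + 1, by omega⟩ z hmd').mp hs
    · rintro ⟨y', ⟨hblev, hsem⟩, hs⟩
      have hblev' : y'.1.val ≤ a.val + 1 := hblev
      rcases hsem with hd | ⟨u, z, yw, hu, huz, hzyw, hyw⟩
      · have hd' : a.val = d := hd
        exact absurd hd' (by omega)
      · have h2 : typeOf R V X (d - a.val) u = typeOf R V X (d - a.val) v := hu
        have hrw : d - a.val = (d - a.val - 1) + 1 := by omega
        rw [hrw] at h2
        obtain ⟨z', hvz', hzz'⟩ := typeOf_lift R V X h2 huz
        have hyws : Sat R V yw ψ := by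
          have hb : md ψ ≤ d - y'.1.val := by omega
          have hnode := ih hv y'.1 yw hb
          have hy'eq : (⟨y'.1, typeOf R V X (d - y'.1.val) yw⟩ : Wfin X d) = y' :=
            Sigma.ext rfl (heq_of_eq hyw)
          rw [hy'eq] at hnode
          exact hnode.mpr hs
        have e1 : typeOf R V X (d - a.val - 1) z' = typeOf R V X (d - a.val - 1) yw :=
          hzz'.symm.trans hzyw
        have hmd'' : md ψ ≤ d - a.val - 1 := by omega
        exact ⟨z', hvz', (sat_pres R V X ψ hv _ hmd'' z' yw e1).mpr hyws⟩

/-- The finite model is a `Φ`-frame. -/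
lemma phiFin (Φ : Set (ℕ × ℕ)) (hΦ : ∀ mn ∈ Φ, 1 < mn.1 ∧ mn.1 < mn.2)
    (hFrame : PhiFrame R Φ) : PhiFrame (Rfin R V X d) Φ := by
  intro mn hmem x y hpath
  obtain ⟨hm, hmn⟩ := hΦ mn hmem
  set m := mn.1 with hmdef
  set n := mn.2 with hndef
  obtain ⟨f, hf0, hfm, hE⟩ := relPow_seq hpath
  subst hf0
  subst hfm
  by_cases hcase : ∃ i, i < m ∧ (f i).1.val = d
  · -- a world at level d occurs as a source: insert a self-loop there
    obtain ⟨i, him, hid⟩ := hcase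
    have hloop : Rfin R V X d (f i) (f i) := ⟨by omega, Or.inl hid⟩
    have h1 : relPow (Rfin R V X d) (i - 0) (f 0) (f i) :=
      relPow_seq_from f 0 i (by omega) (fun j _ hj => hE j (by omega))
    have h2 : relPow (Rfin R V X d) (n - m) (f i) (f i) := relPow_loop _ hloop _
    have h3 : relPow (Rfin R V X d) (m - i) (f i) (f m) :=
      relPow_seq_from f i m (le_of_lt him) (fun j hj1 hj2 => hE j hj2)
    have h4 := relPow_append (relPow_append h1 h2) h3
    have harith : (i - 0) + (n - m) + (m - i) = n := by omega
    rwa [harith] at h4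
  · push_neg at hcase
    have hlt : ∀ i, i < m → (f i).1.val < d := by
      intro i hi
      have h1 : (f i).1.val < d + 1 := (f i).1.isLt
      have h2 := hcase i hi
      omega
    have hsem : ∀ i, i < m → ∃ u z yw,
        typeOf R V X (d - (f i).1.val) u = (f i).2 ∧ R u z ∧
        typeOf R V X (d - (f i).1.val - 1) z = typeOf R V X (d - (f i).1.val - 1) yw ∧
        typeOf R V X (d - (f (i+1)).1.val) yw = (f (i+1)).2 := by
      intro i hi
      rcases (hE i hi).2 with h | h
      · exact absurd h (Nat.ne_of_lt (hlt i hi))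
      · exact h
    have hlev : ∀ i, i < m → (f (i+1)).1.val ≤ (f i).1.val + 1 := fun i hi => (hE i hi).1
    set c0 := (f 0).1.val with hc0
    have hm0 : 0 < m := by omega
    have hc0d : c0 < d := hlt 0 hm0
    set K := d - c0 with hK
    have hK1 : 1 ≤ K := by omega
    have hcmono : ∀ j, j ≤ m → (f j).1.val ≤ c0 + j := by
      intro j
      induction j with
      | zero => intro _; omega
      | succ k ih =>
        intro h
        have e1 := hlev k (by omega)
        have e2 := ih (by omega)
        omega
    -- Extraction of a genuine path in the original model
    have extract : ∀ J, J ≤ m → J ≤ K → ∃ w yr : ℕ → W,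
        (∀ j, j < J → R (w j) (w (j+1))) ∧
        (∀ j, j ≤ J → typeOf R V X (d - (f j).1.val) (yr j) = (f j).2 ∧
          typeOf R V X (K - j) (w j) = typeOf R V X (K - j) (yr j)) := by
      intro J
      induction J with
      | zero =>
        intro _ _
        obtain ⟨u, z, yw, hu, _, _, _⟩ := hsem 0 hm0
        refine ⟨fun _ => u, fun _ => u, by omega, ?_⟩
        intro j hj
        have : j = 0 := by omega
        subst this
        exact ⟨hu, rfl⟩
      | succ J ihJ =>
        intro hJm hJK
        obtain ⟨w, yr, hw, hinv⟩ := ihJ (by omega) (by omega)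
        obtain ⟨u, z, yw, hu, huz, hzyw, hyw⟩ := hsem J (by omega)
        have hA := (hinv J le_rfl).1
        have hB := (hinv J le_rfl).2
        have hfJ : (f J).1.val ≤ c0 + J := hcmono J (by omega)
        have h1 : typeOf R V X (d - (f J).1.val) u = typeOf R V X (d - (f J).1.val) (yr J) :=
          hu.trans hA.symm
        have h2 : typeOf R V X (K - J) u = typeOf R V X (K - J) (w J) :=
          (typeOf_mono R V X (by omega) h1).trans hB.symm
        have hKJ : K - J = (K - (J+1)) + 1 := by omega
        rw [hKJ] at h2
        obtain ⟨z', hz', he⟩ := typeOf_lift R V X h2 huz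
        have he2 : typeOf R V X (K - (J+1)) z' = typeOf R V X (K - (J+1)) yw :=
          he.symm.trans (typeOf_mono R V X (by omega) hzyw)
        refine ⟨fun j => if j ≤ J then w j else z', fun j => if j ≤ J then yr j else yw, ?_, ?_⟩
        · intro j hj
          by_cases hjJ : j < J
          · simp only [if_pos (by omega : j ≤ J), if_pos (by omega : j + 1 ≤ J)]
            exact hw j hjJ
          · have : j = J := by omega
            subst this
            simp only [if_pos le_rfl, if_neg (by omega : ¬ (j + 1 ≤ j))]
            exact hz'
        · intro j hj
          by_cases hjJ : j ≤ J
          · simp only [if_pos hjJ]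
            exact hinv j hjJ
          · have : j = J + 1 := by omega
            subst this
            simp only [if_neg (by omega : ¬ (J + 1 ≤ J))]
            exact ⟨hyw, he2⟩
    by_cases hmK : m ≤ K
    · -- the path fully lifts to the original model; apply the Φ-property there
      obtain ⟨w, yr, hw, hinv⟩ := extract m le_rfl hmK
      have hreal : relPow R (m - 0) (w 0) (w m) :=
        relPow_seq_from w 0 m (by omega) (fun j _ hj => hw j hj)
      rw [Nat.sub_zero] at hreal
      have hn : relPow R n (w 0) (w m) := hFrame mn hmem _ _ hreal
      obtain ⟨z, hz0, hzn, hzE⟩ := relPow_seq hn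
      have hc0m : c0 + m ≤ d := by omega
      have hℓd : ∀ j : ℕ, min (c0 + j) (c0 + m - 1) < d := by
        intro j
        have := min_le_right (c0 + j) (c0 + m - 1)
        omega
      set q : ℕ → Wfin X d := fun j =>
        ⟨⟨min (c0 + j) (c0 + m - 1), by have := hℓd j; omega⟩,
          typeOf R V X (d - min (c0 + j) (c0 + m - 1)) (z j)⟩ with hq
      set g : ℕ → Wfin X d := fun j =>
        if j = 0 then f 0 else if j < n then q j else f m with hg
      have hE' : ∀ i, i < n → Rfin R V X d (g i) (g (i + 1)) := by
        intro i hi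
        by_cases hi0 : i = 0
        · subst hi0
          have h1n : 1 < n := by omega
          have hg0 : g 0 = f 0 := by simp [hg]
          have hg1 : g 1 = q 1 := by simp [hg, h1n]
          rw [hg0, hg1]
          refine ⟨?_, Or.inr ⟨w 0, z 1, z 1, ?_, ?_, rfl, rfl⟩⟩
          · show min (c0 + 1) (c0 + m - 1) ≤ (f 0).1.val + 1
            omega
          · have e1 := (hinv 0 (by omega)).1
            have e2 := (hinv 0 (by omega)).2
            exact e2.trans e1
          · have := hzE 0 (by omega)
            rwa [hz0] at this
        · by_cases hin : i + 1 < n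
          · have hgi : g i = q i := by simp [hg, hi0, (by omega : i < n)]
            have hgi1 : g (i + 1) = q (i + 1) := by
              simp [hg, (by omega : ¬ (i + 1 = 0)), hin]
            rw [hgi, hgi1]
            refine ⟨?_, Or.inr ⟨z i, z (i + 1), z (i + 1), rfl, hzE i (by omega), rfl, rfl⟩⟩
            show min (c0 + (i + 1)) (c0 + m - 1) ≤ min (c0 + i) (c0 + m - 1) + 1
            omega
          · have hieq : i + 1 = n := by omega
            have hgi : g i = q i := by simp [hg, hi0, (by omega : i < n)]
            have hgi1 : g (i + 1) = f m := by
              simp only [hg]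
              rw [if_neg (by omega : ¬ (i + 1 = 0)), if_neg (by omega : ¬ (i + 1 < n))]
            rw [hgi, hgi1]
            have hym : (f m).1.val ≤ c0 + m := hcmono m le_rfl
            refine ⟨?_, Or.inr ⟨z i, z (i + 1), yr m, rfl, hzE i (by omega), ?_, ?_⟩⟩
            · show (f m).1.val ≤ min (c0 + i) (c0 + m - 1) + 1
              omega
            · show typeOf R V X (d - min (c0 + i) (c0 + m - 1) - 1) (z (i + 1))
                = typeOf R V X (d - min (c0 + i) (c0 + m - 1) - 1) (yr m)
              have hzi1 : z (i + 1) = w m := by rw [hieq, hzn]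
              have harith : d - min (c0 + i) (c0 + m - 1) - 1 = K - m := by omega
              rw [hzi1, harith]
              exact (hinv m le_rfl).2
            · exact (hinv m le_rfl).1
      have hfin := relPow_seq_from (S := Rfin R V X d) g 0 n (by omega) (fun i _ hi => hE' i hi)
      have hg0 : g 0 = f 0 := by simp [hg]
      have hgn : g n = f m := by
        simp only [hg]
        rw [if_neg (by omega : ¬ (n = 0)), if_neg (lt_irrefl n)]
      rw [hg0, hgn, Nat.sub_zero] at hfin
      exact hfin
    · -- the path descends to level d; detour through level d with loops
      push_neg at hmK
      obtain ⟨w, yr, hw, hinv⟩ := extract K (by omega) le_rfl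
      have hminK : ∀ j : ℕ, j ≤ K → min (c0 + j) d = c0 + j := by
        intro j hj
        omega
      set q : ℕ → Wfin X d := fun j =>
        ⟨⟨min (c0 + j) d, by omega⟩, typeOf R V X (d - min (c0 + j) d) (w j)⟩ with hq
      set g : ℕ → Wfin X d := fun j =>
        if j = 0 then f 0 else if j ≤ K then q j else if j < n then q K else f m with hg
      have hqK : (q K).1.val = d := by
        show min (c0 + K) d = d
        omega
      have hE' : ∀ i, i < n → Rfin R V X d (g i) (g (i + 1)) := by
        intro i hi
        by_cases hi0 : i = 0
        · subst hi0
          have hg0 : g 0 = f 0 := by simp [hg]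
          have hg1 : g 1 = q 1 := by simp [hg, hK1]
          rw [hg0, hg1]
          refine ⟨?_, Or.inr ⟨w 0, w 1, w 1, ?_, hw 0 (by omega), rfl, rfl⟩⟩
          · show min (c0 + 1) d ≤ (f 0).1.val + 1
            omega
          · have e1 := (hinv 0 (by omega)).1
            have e2 := (hinv 0 (by omega)).2
            exact e2.trans e1
        · by_cases hiK : i < K
          · have hgi : g i = q i := by simp [hg, hi0, (by omega : i ≤ K)]
            have hgi1 : g (i + 1) = q (i + 1) := by
              simp [hg, (by omega : ¬ (i + 1 = 0)), (by omega : i + 1 ≤ K)]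
            rw [hgi, hgi1]
            refine ⟨?_, Or.inr ⟨w i, w (i + 1), w (i + 1), rfl, hw i hiK, rfl, rfl⟩⟩
            show min (c0 + (i + 1)) d ≤ min (c0 + i) d + 1
            omega
          · -- i ≥ K : we sit at the level-d node q K (or jump to f m at the end)
            have hgi : g i = q K := by
              by_cases hiK' : i ≤ K
              · have : i = K := by omega
                subst this
                simp [hg, hi0]
              · simp [hg, hi0, hiK', (by omega : i < n)]
            rw [hgi]
            by_cases hin : i + 1 < n
            · have hgi1 : g (i + 1) = q K := by
                by_cases h1K : i + 1 ≤ K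
                · have hiK2 : i + 1 = K := by omega
                  rw [hiK2]
                  simp only [hg]
                  rw [if_neg (by omega : ¬ (K = 0)), if_pos le_rfl]
                · simp [hg, (by omega : ¬ (i + 1 = 0)), h1K, hin]
              rw [hgi1]
              exact ⟨by omega, Or.inl hqK⟩
            · have hgi1 : g (i + 1) = f m := by
                simp only [hg]
                rw [if_neg (by omega : ¬ (i + 1 = 0)), if_neg (by omega : ¬ (i + 1 ≤ K)),
                  if_neg (by omega : ¬ (i + 1 < n))]
              rw [hgi1]
              refine ⟨?_, Or.inl hqK⟩
              have := (f m).1.isLt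
              rw [hqK]
              omega
      have hfin := relPow_seq_from (S := Rfin R V X d) g 0 n (by omega) (fun i _ hi => hE' i hi)
      have hg0 : g 0 = f 0 := by simp [hg]
      have hgn : g n = f m := by
        simp only [hg]
        rw [if_neg (by omega : ¬ (n = 0)), if_neg (by omega : ¬ (n ≤ K)),
          if_neg (lt_irrefl n)]
      rw [hg0, hgn, Nat.sub_zero] at hfin
      exact hfin

end Model

end FMPAux

/-- Main theorem (semantic FMP): if `φ` is satisfiable in a `Φ`-frame model, it is
satisfiable in a finite `Φ`-frame model. -/
theorem statement0 (Φ : Set (ℕ × ℕ)) (hΦ : ∀ mn ∈ Φ, 1 < mn.1 ∧ mn.1 < mn.2)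
    (φ : ModalFormula) {W : Type*} (R : W → W → Prop) (V : ℕ → Set W) (w : W)
    (hFrame : PhiFrame R Φ) (hSat : Sat R V w φ) :
    ∃ (W' : Type) (R' : W' → W' → Prop) (V' : ℕ → Set W') (w' : W'),
      Finite W' ∧ PhiFrame R' Φ ∧ Sat R' V' w' φ := by
  classical
  set X := ModalFormula.vars φ with hX
  haveI : Finite ↥X := (FMPAux.vars_finite φ).to_subtype
  set d := ModalFormula.md φ with hd
  refine ⟨FMPAux.Wfin X d, FMPAux.Rfin R V X d, FMPAux.Vfin X d,
    ⟨⟨0, by omega⟩, FMPAux.typeOf R V X (d - 0) w⟩, ?_, ?_, ?_⟩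
  · exact FMPAux.finiteWfin X d
  · exact FMPAux.phiFin R V X d Φ hΦ hFrame
  · have h := FMPAux.truth R V X d φ subset_rfl ⟨0, by omega⟩ w (by simp [hd])
    exact h.mp hSat
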